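/- Any Tarskian system execution satisfying the Lazy Set axioms A0–A2 is linearizable: there exists a linear order <₀ on the events extending the precedence relation < such that <₀ together with γ satisfies FS0, FS1, and FS2. -/
import Mathlib


/-- Event type: Add, Rem, or Contains. -/
inductive EType | add | rem | cnt
deriving DecidableEq

/-- Status of an event: 0, 1, or f (failed). -/
inductive Status | s0 | s1 | sf
deriving DecidableEq

open EType Status

/-- A Tarskian system execution satisfying the Lazy Set axioms A0–A2.
Events are typed Add/Rem/Cnt; Add and Rem events are actions (with
Begin(E) = End(E) = E) and the actions are linearly ordered by the temporal
precedence relation `lt`; Cnt events are high-level with Begin(E) < End(E);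
`γ` is defined on the Op¹ events and satisfies axioms A1 and A2. -/
structure LazySys where
  E : Type
  lt : E → E → Prop
  typ : E → EType
  χ : E → Status
  kval : E → ℕ
  Begin : E → E
  End' : E → E
  γ : E → E
  action : E → Prop
  lt_irrefl : ∀ e, ¬ lt e e
  lt_trans : ∀ a b c, lt a b → lt b c → lt a c
  act_lin : ∀ a b, action a → action b → a ≠ b → lt a b ∨ lt b a
  addRem_action : ∀ e, typ e ≠ EType.cnt →
    action e ∧ Begin e = e ∧ End' e = e
  begin_end_action : ∀ e, action (Begin e) ∧ action (End' e)
  cnt_interval : ∀ e, typ e = EType.cnt → lt (Begin e) (End' e)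
  lt_iff : ∀ a b, lt a b ↔ lt (End' a) (Begin b)
  A1 : ∀ A, χ A = Status.s1 →
    typ (γ A) = EType.add ∧ χ (γ A) = Status.s0 ∧ kval (γ A) = kval A ∧
    lt (γ A) (End' A) ∧
    ¬ ∃ R, typ R = EType.rem ∧ χ R = Status.s1 ∧ γ R = γ A ∧
      lt (γ A) R ∧ lt R A
  A2 : ∀ A B, typ A = EType.add → χ A = Status.s0 → χ B = Status.s0 →
    lt A B → kval A = kval B →
    ∃ R, typ R = EType.rem ∧ χ R = Status.s1 ∧ γ R = A ∧ lt R (End' B)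

/-- The auxiliary relation ⇒ used in the linearization proof. -/
def LazySys.arrow (S : LazySys) (X Y : S.E) : Prop :=
  (S.typ Y = EType.cnt ∧ S.χ Y = Status.s1 ∧ X = S.γ Y) ∨
  (S.typ X = EType.cnt ∧ S.χ X = Status.s1 ∧
    S.typ Y = EType.rem ∧ S.χ Y = Status.s1 ∧ S.γ Y = S.γ X) ∨
  (S.typ X = EType.rem ∧ S.χ X = Status.s1 ∧
    S.typ Y = EType.cnt ∧ S.χ Y = Status.s0 ∧
    S.kval X = S.kval Y ∧ ¬ S.lt Y X ∧ S.lt (S.γ X) Y) ∨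
  (S.typ X = EType.cnt ∧ S.χ X = Status.s0 ∧
    S.typ Y = EType.add ∧ S.χ Y = Status.s0 ∧
    S.kval X = S.kval Y ∧ ¬ S.lt Y X)

namespace LazySys


variable (S : LazySys)

theorem asym {a b : S.E} (h : S.lt a b) : ¬ S.lt b a :=
  fun h' => S.lt_irrefl a (S.lt_trans _ _ _ h h')

/-- The set of events weakly preceding `x`. -/
def dset (x : S.E) : Set S.E := {z | S.lt z x ∨ z = x}

/-- Rank of an event: number of events weakly preceding it. -/
noncomputable def rnk (x : S.E) : ℕ := (S.dset x).ncard

theorem act_of {e : S.E} (h : S.typ e ≠ cnt) : S.action e := (S.addRem_action e h).1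
theorem beg_eq {e : S.E} (h : S.typ e ≠ cnt) : S.Begin e = e := (S.addRem_action e h).2.1
theorem end_eq {e : S.E} (h : S.typ e ≠ cnt) : S.End' e = e := (S.addRem_action e h).2.2

/-- Rank of the begin action. -/
noncomputable def rh (e : S.E) : ℕ := S.rnk (S.Begin e)
/-- Rank of the end action. -/
noncomputable def sg (e : S.E) : ℕ := S.rnk (S.End' e)

theorem rh_eq {e : S.E} (h : S.typ e ≠ cnt) : S.rh e = S.rnk e := by
  unfold rh; rw [S.beg_eq h]
theorem sg_eq {e : S.E} (h : S.typ e ≠ cnt) : S.sg e = S.rnk e := by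
  unfold sg; rw [S.end_eq h]

/-- The ranks of the `Rem¹` events that must come before a `Cnt⁰` event `b`. -/
def inK (b : S.E) : Set ℕ :=
  S.rnk '' {W | S.typ W = rem ∧ S.χ W = s1 ∧ S.kval W = S.kval b ∧
    ¬ S.lt b W ∧ S.lt (S.γ W) b}

noncomputable def uB (b : S.E) : ℕ := sSup (S.inK b)

/-- The rational timestamp. -/
noncomputable def ts (e : S.E) : ℚ :=
  if S.typ e = cnt then
    if S.χ e = s1 then
      max ((S.rh e : ℚ) - 1/4) ((S.rnk (S.γ e) : ℚ) + 1/4)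
    else if S.χ e = s0 then
      max ((S.rh e : ℚ) - 1/4) ((S.uB e : ℚ) + 1/4)
    else (S.rh e : ℚ)
  else (S.rnk e : ℚ)

variable (hfin : ∀ x : S.E, {y : S.E | ¬ S.lt x y}.Finite)
include hfin

theorem dfin (x : S.E) : (S.dset x).Finite := by
  refine (hfin x).subset ?_
  rintro z (hz | rfl)
  · exact S.asym hz
  · exact S.lt_irrefl z

theorem rnk_pos (x : S.E) : 1 ≤ S.rnk x :=
  (Set.ncard_pos (S.dfin hfin x)).mpr ⟨x, Or.inr rfl⟩

theorem rnk_mono {x y : S.E} (h : S.lt x y) : S.rnk x < S.rnk y := by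
  refine Set.ncard_lt_ncard ?_ (S.dfin hfin y)
  constructor
  · rintro z (hz | rfl)
    · exact Or.inl (S.lt_trans _ _ _ hz h)
    · exact Or.inl h
  · intro hsub
    rcases hsub (Or.inr rfl : y ∈ S.dset y) with hy | heq
    · exact S.asym h hy
    · exact S.lt_irrefl _ (heq ▸ h)

/-- For actions, failure of `lt a b` gives a rank inequality. -/
theorem act_rnk {a b : S.E} (ha : S.action a) (hb : S.action b)
    (h : ¬ S.lt a b) : S.rnk b ≤ S.rnk a := by
  by_cases hab : a = b
  · exact le_of_eq (congrArg S.rnk hab.symm)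
  · rcases S.act_lin a b ha hb hab with h' | h'
    · exact absurd h' h
    · exact (S.rnk_mono hfin h').le

theorem sg_lt_rh {e f : S.E} (h : S.lt e f) : S.sg e < S.rh f :=
  S.rnk_mono hfin ((S.lt_iff e f).1 h)

theorem rh_le_sg (e : S.E) : S.rh e ≤ S.sg e := by
  by_cases h : S.typ e = cnt
  · exact (S.rnk_mono hfin (S.cnt_interval e h)).le
  · unfold rh sg; rw [S.beg_eq h, S.end_eq h]

theorem inK_le_sg {b : S.E} {n : ℕ} (hn : n ∈ S.inK b) : n ≤ S.sg b := by
  obtain ⟨W, ⟨hrem, _, _, hnlt, _⟩, rfl⟩ := hn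
  have hW : S.typ W ≠ cnt := by rw [hrem]; simp
  have h1 : ¬ S.lt (S.End' b) W := by
    intro hc
    exact hnlt ((S.lt_iff b W).2 (by rwa [S.beg_eq hW]))
  exact S.act_rnk hfin (S.begin_end_action b).2 (S.act_of hW) h1

theorem uB_le_sg (b : S.E) : S.uB b ≤ S.sg b :=
  csSup_le' (fun n hn => S.inK_le_sg hfin hn)

theorem le_uB {b : S.E} {n : ℕ} (hn : n ∈ S.inK b) : n ≤ S.uB b :=
  le_csSup ⟨S.sg b, fun m hm => S.inK_le_sg hfin hm⟩ hn

omit hfin in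
/-- Key lemma (uses A2): a pending remove that must precede `b` precedes any
add of the same key that does not precede `b`. -/
theorem key4 {b W Z : S.E}
    (hWr : S.typ W = rem) (hW1 : S.χ W = s1) (hWk : S.kval W = S.kval b)
    (hnbW : ¬ S.lt b W) (hgWb : S.lt (S.γ W) b)
    (hZa : S.typ Z = add) (hZ0 : S.χ Z = s0) (hb0 : S.χ b = s0)
    (hbk : S.kval b = S.kval Z) (hnZb : ¬ S.lt Z b) :
    S.lt W Z := by
  obtain ⟨hgWa, hgW0, hgWk, hgWlt, hneg⟩ := S.A1 W hW1
  have hWact : S.action W := S.act_of (by rw [hWr]; simp)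
  have hZact : S.action Z := S.act_of (by rw [hZa]; simp)
  have hgWact : S.action (S.γ W) := S.act_of (by rw [hgWa]; simp)
  by_contra hnWZ
  have hZW : S.lt Z W := by
    rcases eq_or_ne W Z with rfl | hne
    · rw [hWr] at hZa; exact absurd hZa (by simp)
    · rcases S.act_lin W Z hWact hZact hne with h | h
      · exact absurd h hnWZ
      · exact h
  -- compare Z with γ W
  rcases eq_or_ne Z (S.γ W) with rfl | hne
  · exact hnZb hgWb
  rcases S.act_lin Z (S.γ W) hZact hgWact hne with h | h
  · exact hnZb (S.lt_trans _ _ _ h hgWb)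
  · -- lt (γ W) Z : apply A2 to (γ W, Z)
    obtain ⟨R, hRr, hR1, hRg, hRlt⟩ :=
      S.A2 (S.γ W) Z hgWa hgW0 hZ0 h (by rw [hgWk, hWk, hbk])
    rw [S.end_eq (e := Z) (by rw [hZa]; simp)] at hRlt
    obtain ⟨_, _, _, hgRlt, _⟩ := S.A1 R hR1
    rw [S.end_eq (e := R) (by rw [hRr]; simp), hRg] at hgRlt
    exact hneg ⟨R, hRr, hR1, hRg, hgRlt, S.lt_trans _ _ _ hRlt hZW⟩

omit hfin in
theorem ts_lb (e : S.E) : (S.rh e : ℚ) - 1/2 < S.ts e := by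
  unfold ts
  by_cases h : S.typ e = cnt
  · rw [if_pos h]
    by_cases h1 : S.χ e = s1
    · rw [if_pos h1]
      have := le_max_left ((S.rh e : ℚ) - 1/4) ((S.rnk (S.γ e) : ℚ) + 1/4)
      linarith
    · rw [if_neg h1]
      by_cases h0 : S.χ e = s0
      · rw [if_pos h0]
        have := le_max_left ((S.rh e : ℚ) - 1/4) ((S.uB e : ℚ) + 1/4)
        linarith
      · rw [if_neg h0]; linarith
  · rw [if_neg h, S.rh_eq h]; linarith

theorem ts_ub (e : S.E) : S.ts e < (S.sg e : ℚ) + 1/2 := by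
  have hrs : S.rh e ≤ S.sg e := S.rh_le_sg hfin e
  have hrs' : (S.rh e : ℚ) ≤ (S.sg e : ℚ) := by exact_mod_cast hrs
  unfold ts
  by_cases h : S.typ e = cnt
  · rw [if_pos h]
    by_cases h1 : S.χ e = s1
    · rw [if_pos h1]
      obtain ⟨_, _, _, hlt, _⟩ := S.A1 e h1
      have : S.rnk (S.γ e) < S.sg e := S.rnk_mono hfin hlt
      have : (S.rnk (S.γ e) : ℚ) + 1 ≤ (S.sg e : ℚ) := by exact_mod_cast this
      apply max_lt <;> linarith
    · rw [if_neg h1]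
      by_cases h0 : S.χ e = s0
      · rw [if_pos h0]
        have : (S.uB e : ℚ) ≤ (S.sg e : ℚ) := by exact_mod_cast S.uB_le_sg hfin e
        apply max_lt <;> linarith
      · rw [if_neg h0]; linarith
  · rw [if_neg h, S.sg_eq h]; linarith

theorem ts_lt {e f : S.E} (h : S.lt e f) : S.ts e < S.ts f := by
  have h1 : S.sg e < S.rh f := S.sg_lt_rh hfin h
  have h1' : (S.sg e : ℚ) + 1 ≤ (S.rh f : ℚ) := by exact_mod_cast h1
  have h2 := S.ts_ub hfin e
  have h3 := S.ts_lb f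
  linarith

theorem ts_arrow {X Y : S.E} (h : S.arrow X Y) : S.ts X < S.ts Y := by
  rcases h with ⟨hYc, hY1, rfl⟩ | ⟨hXc, hX1, hYr, hY1, hg⟩ |
    ⟨hXr, hX1, hYc, hY0, hk, hnlt, hglt⟩ | ⟨hXc, hX0, hYa, hY0, hk, hnlt⟩
  · -- case 1 : X = γ Y, Y cnt s1
    obtain ⟨hadd, _, _, _, _⟩ := S.A1 Y hY1
    have h1 : S.ts (S.γ Y) = (S.rnk (S.γ Y) : ℚ) := by
      unfold ts; rw [if_neg (by rw [hadd]; simp)]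
    have h2 : S.ts Y = max ((S.rh Y : ℚ) - 1/4) ((S.rnk (S.γ Y) : ℚ) + 1/4) := by
      unfold ts; rw [if_pos hYc, if_pos hY1]
    rw [h1, h2]
    have := le_max_right ((S.rh Y : ℚ) - 1/4) ((S.rnk (S.γ Y) : ℚ) + 1/4)
    linarith
  · -- case 2 : X cnt s1, Y rem s1, γ Y = γ X
    have hYnc : S.typ Y ≠ cnt := by rw [hYr]; simp
    obtain ⟨_, _, _, hYlt, _⟩ := S.A1 Y hY1
    rw [S.end_eq hYnc] at hYlt
    rw [hg] at hYlt
    obtain ⟨_, _, _, _, hneg⟩ := S.A1 X hX1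
    have hnYX : ¬ S.lt Y X := fun hc => hneg ⟨Y, hYr, hY1, hg, hYlt, hc⟩
    have hnYB : ¬ S.lt Y (S.Begin X) := fun hc =>
      hnYX ((S.lt_iff Y X).2 (by rwa [S.end_eq hYnc]))
    have h1 : S.rh X ≤ S.rnk Y :=
      S.act_rnk hfin (S.act_of hYnc) (S.begin_end_action X).1 hnYB
    have h2 : S.rnk (S.γ X) < S.rnk Y := S.rnk_mono hfin hYlt
    have e1 : S.ts X = max ((S.rh X : ℚ) - 1/4) ((S.rnk (S.γ X) : ℚ) + 1/4) := by
      unfold ts; rw [if_pos hXc, if_pos hX1]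
    have e2 : S.ts Y = (S.rnk Y : ℚ) := by unfold ts; rw [if_neg hYnc]
    rw [e1, e2]
    have h1' : (S.rh X : ℚ) ≤ (S.rnk Y : ℚ) := by exact_mod_cast h1
    have h2' : (S.rnk (S.γ X) : ℚ) + 1 ≤ (S.rnk Y : ℚ) := by exact_mod_cast h2
    apply max_lt <;> linarith
  · -- case 3 : X rem s1, Y cnt s0
    have hXnc : S.typ X ≠ cnt := by rw [hXr]; simp
    have hmem : S.rnk X ∈ S.inK Y := ⟨X, ⟨hXr, hX1, hk, hnlt, hglt⟩, rfl⟩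
    have h1 : S.rnk X ≤ S.uB Y := S.le_uB hfin hmem
    have e1 : S.ts X = (S.rnk X : ℚ) := by unfold ts; rw [if_neg hXnc]
    have e2 : S.ts Y = max ((S.rh Y : ℚ) - 1/4) ((S.uB Y : ℚ) + 1/4) := by
      unfold ts; rw [if_pos hYc, if_neg (by rw [hY0]; simp), if_pos hY0]
    rw [e1, e2]
    have h1' : (S.rnk X : ℚ) ≤ (S.uB Y : ℚ) := by exact_mod_cast h1
    have := le_max_right ((S.rh Y : ℚ) - 1/4) ((S.uB Y : ℚ) + 1/4)
    linarith
  · -- case 4 : X cnt s0, Y add s0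
    have hYnc : S.typ Y ≠ cnt := by rw [hYa]; simp
    have hnYB : ¬ S.lt Y (S.Begin X) := fun hc =>
      hnlt ((S.lt_iff Y X).2 (by rwa [S.end_eq hYnc]))
    have h1 : S.rh X ≤ S.rnk Y :=
      S.act_rnk hfin (S.act_of hYnc) (S.begin_end_action X).1 hnYB
    have h2 : ∀ n ∈ S.inK X, n < S.rnk Y := by
      rintro n ⟨W, ⟨hWr, hW1, hWk, hnbW, hgWb⟩, rfl⟩
      exact S.rnk_mono hfin (S.key4 hWr hW1 hWk hnbW hgWb hYa hY0 hX0 hk hnlt)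
    have h3 : S.uB X + 1 ≤ S.rnk Y := by
      have hb : S.uB X ≤ S.rnk Y - 1 :=
        csSup_le' (fun n hn => by have := h2 n hn; omega)
      have := S.rnk_pos hfin Y
      omega
    have e1 : S.ts X = max ((S.rh X : ℚ) - 1/4) ((S.uB X : ℚ) + 1/4) := by
      unfold ts; rw [if_pos hXc, if_neg (by rw [hX0]; simp), if_pos hX0]
    have e2 : S.ts Y = (S.rnk Y : ℚ) := by unfold ts; rw [if_neg hYnc]
    rw [e1, e2]
    have h1' : (S.rh X : ℚ) ≤ (S.rnk Y : ℚ) := by exact_mod_cast h1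
    have h3' : (S.uB X : ℚ) + 1 ≤ (S.rnk Y : ℚ) := by exact_mod_cast h3
    apply max_lt <;> linarith

omit hfin in
/-- The candidate linearization: order by timestamp, break ties by a fixed
well-ordering of the events. -/
def lin0 (a b : S.E) : Prop :=
  S.ts a < S.ts b ∨ (S.ts a = S.ts b ∧ WellOrderingRel a b)

omit hfin in
theorem lin0_irrefl (a : S.E) : ¬ S.lin0 a a := by
  rintro (h | ⟨-, h⟩)
  · exact _root_.lt_irrefl _ h
  · exact irrefl_of WellOrderingRel a h

omit hfin in
theorem lin0_trans {a b c : S.E} (h1 : S.lin0 a b) (h2 : S.lin0 b c) :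
    S.lin0 a c := by
  rcases h1 with h1 | ⟨e1, w1⟩ <;> rcases h2 with h2 | ⟨e2, w2⟩
  · exact Or.inl (h1.trans h2)
  · exact Or.inl (by rw [← e2]; exact h1)
  · exact Or.inl (by rw [e1]; exact h2)
  · exact Or.inr ⟨e1.trans e2, trans_of WellOrderingRel w1 w2⟩

omit hfin in
theorem lin0_asym {a b : S.E} (h1 : S.lin0 a b) : ¬ S.lin0 b a :=
  fun h2 => S.lin0_irrefl a (S.lin0_trans h1 h2)

omit hfin in
theorem lin0_total {a b : S.E} (hne : a ≠ b) : S.lin0 a b ∨ S.lin0 b a := by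
  rcases lt_trichotomy (S.ts a) (S.ts b) with h | h | h
  · exact Or.inl (Or.inl h)
  · rcases trichotomous_of WellOrderingRel a b with w | rfl | w
    · exact Or.inl (Or.inr ⟨h, w⟩)
    · exact absurd rfl hne
    · exact Or.inr (Or.inr ⟨h.symm, w⟩)
  · exact Or.inr (Or.inl h)

theorem lt_lin0 {a b : S.E} (h : S.lt a b) : S.lin0 a b :=
  Or.inl (S.ts_lt hfin h)

theorem arrow_lin0 {a b : S.E} (h : S.arrow a b) : S.lin0 a b :=
  Or.inl (S.ts_arrow hfin h)

end LazySys

/-- Any Tarskian system execution satisfying the Lazy Set axioms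
A0–A2 (with Lamport's finiteness property) is linearizable: there exists a
linear (strict total) order <₀ on the events extending the precedence
relation < such that <₀ together with γ satisfies FS0, FS1, and FS2. -/
theorem stmt11 (S : LazySys)
    (hfin : ∀ x : S.E, {y : S.E | ¬ S.lt x y}.Finite) :
    ∃ lt0 : S.E → S.E → Prop,
      -- <₀ extends <
      (∀ a b, S.lt a b → lt0 a b) ∧
      -- FS0: <₀ is a (strict) linear ordering of the events
      (∀ a, ¬ lt0 a a) ∧
      (∀ a b c, lt0 a b → lt0 b c → lt0 a c) ∧
      (∀ a b : S.E, a ≠ b → lt0 a b ∨ lt0 b a) ∧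
      -- FS1
      (∀ a, S.χ a = s1 →
        lt0 (S.γ a) a ∧ S.typ (S.γ a) = add ∧ S.χ (S.γ a) = s0 ∧
        S.kval (S.γ a) = S.kval a ∧
        ¬ ∃ r, S.typ r = rem ∧ S.χ r = s1 ∧ S.γ r = S.γ a ∧
          lt0 (S.γ a) r ∧ lt0 r a) ∧
      -- FS2
      (∀ a b, lt0 a b → S.typ a = add → S.χ a = s0 → S.χ b = s0 →
        S.kval a = S.kval b →
        ∃ r, lt0 a r ∧ lt0 r b ∧ S.typ r = rem ∧ S.χ r = s1 ∧
          S.γ r = a) := by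
  refine ⟨S.lin0, fun a b h => S.lt_lin0 hfin h, fun a => S.lin0_irrefl a,
    fun a b c h1 h2 => S.lin0_trans h1 h2, fun a b hne => S.lin0_total hne,
    ?_, ?_⟩
  · -- FS1
    intro a ha
    obtain ⟨hadd, h0, hkv, hlt', hneg⟩ := S.A1 a ha
    have hga : S.lin0 (S.γ a) a := by
      by_cases hc : S.typ a = cnt
      · exact S.arrow_lin0 hfin (Or.inl ⟨hc, ha, rfl⟩)
      · exact S.lt_lin0 hfin (by rwa [S.end_eq hc] at hlt')
    refine ⟨hga, hadd, h0, hkv, ?_⟩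
    rintro ⟨r, hrr, hr1, hrg, h1, h2⟩
    by_cases hc : S.typ a = cnt
    · exact S.lin0_asym h2
        (S.arrow_lin0 hfin (Or.inr (Or.inl ⟨hc, ha, hrr, hr1, hrg⟩)))
    · have hrnc : S.typ r ≠ cnt := by rw [hrr]; simp
      have hgnc : S.typ (S.γ a) ≠ cnt := by rw [hadd]; simp
      have hgr : S.lt (S.γ a) r := by
        rcases eq_or_ne (S.γ a) r with heq | hne
        · rw [heq, hrr] at hadd; exact (EType.noConfusion hadd)
        · rcases S.act_lin _ _ (S.act_of hgnc) (S.act_of hrnc) hne with h | h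
          · exact h
          · exact absurd (S.lt_lin0 hfin h) (S.lin0_asym h1)
      have hra : S.lt r a := by
        rcases eq_or_ne r a with rfl | hne
        · exact (S.lin0_irrefl r h2).elim
        · rcases S.act_lin _ _ (S.act_of hrnc) (S.act_of hc) hne with h | h
          · exact h
          · exact absurd (S.lt_lin0 hfin h) (S.lin0_asym h2)
      exact hneg ⟨r, hrr, hr1, hrg, hgr, hra⟩
  · -- FS2
    intro a b h0 hat ha0 hb0 hkab
    have hab : S.lt a b := by
      by_contra hn
      by_cases hc : S.typ b = cnt
      · exact S.lin0_asym h0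
          (S.arrow_lin0 hfin (Or.inr (Or.inr (Or.inr
            ⟨hc, hb0, hat, ha0, hkab.symm, hn⟩))))
      · have hne : b ≠ a := fun heq => S.lin0_irrefl a (heq ▸ h0)
        rcases S.act_lin b a (S.act_of hc) (S.act_of (by rw [hat]; simp)) hne
          with h | h
        · exact S.lin0_asym h0 (S.lt_lin0 hfin h)
        · exact hn h
    obtain ⟨R, hRr, hR1, hRg, hRlt⟩ := S.A2 a b hat ha0 hb0 hab hkab
    have hRnc : S.typ R ≠ cnt := by rw [hRr]; simp
    obtain ⟨_, _, hkR, hgRlt, _⟩ := S.A1 R hR1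
    rw [S.end_eq hRnc, hRg] at hgRlt
    refine ⟨R, S.lt_lin0 hfin hgRlt, ?_, hRr, hR1, hRg⟩
    by_cases hc : S.typ b = cnt
    · have hkRb : S.kval R = S.kval b := by
        rw [← hkab, ← hRg]; exact hkR.symm
      have hnbR : ¬ S.lt b R := fun h =>
        S.asym hRlt (by have := (S.lt_iff b R).1 h; rwa [S.beg_eq hRnc] at this)
      exact S.arrow_lin0 hfin (Or.inr (Or.inr (Or.inl
        ⟨hRr, hR1, hc, hb0, hkRb, hnbR, by rw [hRg]; exact hab⟩)))
    · rw [S.end_eq hc] at hRlt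
      exact S.lt_lin0 hfin hRlt
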